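/- arXiv:math/9907076 — 5 statements merged into one kernel-verified Lean document; each statement's English description precedes it below -/
import Mathlib

section
/- For a graph G on vertices v_1,...,v_d with edge e = v_{d-1}v_d, the noncommutative chromatic symmetric function satisfies the deletion-contraction law Y_G = Y_{G∖e} − (Y_{G/e})↑, where contraction labels the merged vertex v_{d-1} and ↑ is the linear operation sending x_{i_1}···x_{i_{d-1}} to x_{i_1}···x_{i_{d-2}} x_{i_{d-1}}². -/
open Finset

attribute [local instance] Classical.propDecidable

/-- Homogeneous degree-`d` noncommutative symmetric functions, viewed as
coefficient functions on words of length `d` in the variables. -/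
abbrev NCF (d : ℕ) := (Fin d → ℕ) → ℚ

/-- A coloring is proper for the edge family `ends` if the endpoints of every
edge receive distinct colors. -/
def Proper {d : ℕ} {ε : Type*} {C : Type*} (ends : ε → Sym2 (Fin d)) (w : Fin d → C) : Prop :=
  ∀ (e : ε) (i j : Fin d), ends e = s(i, j) → w i ≠ w j

/-- The noncommutative chromatic symmetric function `Y_G`. -/
noncomputable def Y {d : ℕ} {ε : Type*} (ends : ε → Sym2 (Fin d)) : NCF d :=
  fun w => if Proper ends w then 1 else 0

/-- Noncommutative monomial symmetric function indexed by a set partition. -/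
noncomputable def mFun {d : ℕ} (π : Setoid (Fin d)) : NCF d :=
  fun w => if (∀ i j, w i = w j ↔ π i j) then 1 else 0

/-- Noncommutative power sum symmetric function indexed by a set partition. -/
noncomputable def pFun {d : ℕ} (π : Setoid (Fin d)) : NCF d :=
  fun w => if (∀ i j, π i j → w i = w j) then 1 else 0

/-- Noncommutative elementary symmetric function indexed by a set partition. -/
noncomputable def eFun {d : ℕ} (π : Setoid (Fin d)) : NCF d :=
  fun w => if (∀ i j, i ≠ j → π i j → w i ≠ w j) then 1 else 0

noncomputable instance setoidFintype (d : ℕ) : Fintype (Setoid (Fin d)) :=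
  Fintype.ofInjective (fun s : Setoid (Fin d) => (s : Fin d → Fin d → Prop))
    (fun s t h => Setoid.ext fun a b => by
      have := congrFun (congrFun h a) b; simpa using this.to_iff)

/-- Position action of a permutation on words/NCFs. -/
noncomputable def act {d : ℕ} (δ : Equiv.Perm (Fin d)) (f : NCF d) : NCF d :=
  fun w => f (w ∘ δ)

/-- The induction operator `↑`, repeating the last variable. -/
noncomputable def up {n : ℕ} (f : NCF (n + 1)) : NCF (n + 2) :=
  fun w => if w (Fin.last (n + 1)) = w ⟨n, by omega⟩ then f (fun i => w i.castSucc) else 0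

/-- Vertex map collapsing the last vertex onto the next-to-last one (for contraction). -/
def collapse {n : ℕ} : Fin (n + 2) → Fin (n + 1) :=
  fun i => if h : (i : ℕ) < n + 1 then ⟨i, h⟩ else ⟨n, by omega⟩

/-- The partition of `[d]` into connected components of the spanning subgraph with edge set `S`. -/
def components {d : ℕ} {ε : Type*} (ends : ε → Sym2 (Fin d)) (S : Finset ε) :
    Setoid (Fin d) :=
  Relation.EqvGen.setoid (fun i j => ∃ e ∈ S, ends e = s(i, j))

/-- The size of the block of `π` containing `i`. -/
noncomputable def blockCard {n : ℕ} (π : Setoid (Fin n)) (i : Fin n) : ℕ :=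
  (Finset.univ.filter (fun j => π i j)).card

/-- The multiset of block sizes (the type `λ(π)`) of a set partition. -/
noncomputable def sizes {n : ℕ} (π : Setoid (Fin n)) : Multiset ℕ :=
  (Finset.univ.image (fun i => Finset.univ.filter (fun j => π i j))).val.map Finset.card

/-- `σ ≡ᵢ τ` : same type and blocks containing `i` of equal size. -/
def cls {n : ℕ} (i : Fin n) (σ τ : Setoid (Fin n)) : Prop :=
  sizes σ = sizes τ ∧ blockCard σ i = blockCard τ i

/-- Congruence modulo `i` of noncommutative symmetric functions: the amalgamated
coefficients of their `e`-expansions agree on every `≡ᵢ`-class. -/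
noncomputable def EquivI {n : ℕ} (i : Fin n) (F G : NCF n) : Prop :=
  ∃ a b : Setoid (Fin n) → ℚ,
    F = ∑ τ : Setoid (Fin n), a τ • eFun τ ∧
    G = ∑ τ : Setoid (Fin n), b τ • eFun τ ∧
    ∀ τ, (∑ σ : Setoid (Fin n), if cls i σ τ then a σ else 0)
        = ∑ σ : Setoid (Fin n), if cls i σ τ then b σ else 0

/-- `(e)`-positivity with respect to the congruence modulo `i`. -/
noncomputable def EPos {n : ℕ} (i : Fin n) (F : NCF n) : Prop :=
  ∃ a : Setoid (Fin n) → ℚ,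
    F = ∑ τ : Setoid (Fin n), a τ • eFun τ ∧
    ∀ τ, 0 ≤ ∑ σ : Setoid (Fin n), if cls i σ τ then a σ else 0

/-- `(e)`-positivity of a labeled graph: for some labeling and some congruence. -/
noncomputable def EPosG {d : ℕ} {ε : Type*} (ends : ε → Sym2 (Fin d)) : Prop :=
  ∃ (δ : Equiv.Perm (Fin d)) (i : Fin d),
    EPos i (Y (fun e => (ends e).map δ))

/-- Extend a partition of `{0,…,n}` to one of `{0,…,n+m}`: old blocks are kept,
the new elements (indices `≥ n+1`) satisfying `Q` are merged into the block of
the old last element `n`, and the remaining new elements form singletons. -/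
def extendB {n : ℕ} (m : ℕ) (π : Setoid (Fin (n + 1))) (Q : ℕ → Prop) :
    Setoid (Fin (n + 1 + m)) where
  r x y := x = y ∨
    (∃ (hx : (x : ℕ) < n + 1) (hy : (y : ℕ) < n + 1), π ⟨x, hx⟩ ⟨y, hy⟩) ∨
    (((∃ hx : (x : ℕ) < n + 1, π ⟨x, hx⟩ (Fin.last n)) ∨ (n + 1 ≤ (x : ℕ) ∧ Q (x : ℕ))) ∧
     ((∃ hy : (y : ℕ) < n + 1, π ⟨y, hy⟩ (Fin.last n)) ∨ (n + 1 ≤ (y : ℕ) ∧ Q (y : ℕ))))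
  iseqv := by
    constructor
    · intro x; exact Or.inl rfl
    · rintro x y (rfl | ⟨hx, hy, h⟩ | ⟨h1, h2⟩)
      · exact Or.inl rfl
      · exact Or.inr (Or.inl ⟨hy, hx, π.symm h⟩)
      · exact Or.inr (Or.inr ⟨h2, h1⟩)
    · rintro x y z (rfl | ⟨hx, hy, h⟩ | ⟨h1, h2⟩) h'
      · exact h'
      · rcases h' with rfl | ⟨hy', hz, h''⟩ | ⟨h1', h2'⟩
        · exact Or.inr (Or.inl ⟨hx, hy, h⟩)
        · exact Or.inr (Or.inl ⟨hx, hz, π.trans h h''⟩)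
        · rcases h1' with ⟨hy', hB⟩ | ⟨hge, _⟩
          · exact Or.inr (Or.inr ⟨Or.inl ⟨hx, π.trans h hB⟩, h2'⟩)
          · omega
      · rcases h' with rfl | ⟨hy', hz, h''⟩ | ⟨h1', h2'⟩
        · exact Or.inr (Or.inr ⟨h1, h2⟩)
        · rcases h2 with ⟨hy2, hB⟩ | ⟨hge, _⟩
          · exact Or.inr (Or.inr ⟨h1, Or.inl ⟨hz, π.trans (π.trans (π.symm h'') hB) (π.refl _)⟩⟩)
          · omega
        · exact Or.inr (Or.inr ⟨h1, h2'⟩)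

/-- `π + (n+1)` : insert the new element `n+1` into the block containing `n`. -/
def addLast {n : ℕ} (π : Setoid (Fin (n + 1))) : Setoid (Fin (n + 2)) :=
  extendB 1 π (fun _ => True)

/-- `π / (n+1)` : add the new element `n+1` as a singleton block. -/
def addSingleton {n : ℕ} (π : Setoid (Fin (n + 1))) : Setoid (Fin (n + 2)) :=
  extendB 1 π (fun _ => False)

/-- `σ / (d+1),…,(d+m)` : add the new elements as one additional block. -/
def addBlock {d : ℕ} (m : ℕ) (σ : Setoid (Fin d)) : Setoid (Fin (d + m)) where
  r x y := (∃ (hx : (x : ℕ) < d) (hy : (y : ℕ) < d), σ ⟨x, hx⟩ ⟨y, hy⟩) ∨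
    (d ≤ (x : ℕ) ∧ d ≤ (y : ℕ))
  iseqv := by
    constructor
    · intro x
      by_cases h : (x : ℕ) < d
      · exact Or.inl ⟨h, h, σ.refl _⟩
      · exact Or.inr ⟨by omega, by omega⟩
    · rintro x y (⟨hx, hy, h⟩ | ⟨hx, hy⟩)
      · exact Or.inl ⟨hy, hx, σ.symm h⟩
      · exact Or.inr ⟨hy, hx⟩
    · rintro x y z (⟨hx, hy, h⟩ | ⟨hx, hy⟩) (⟨hy', hz, h'⟩ | ⟨hy', hz⟩)
      · exact Or.inl ⟨hx, hz, σ.trans h h'⟩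
      · omega
      · omega
      · exact Or.inr ⟨hx, hz⟩

noncomputable instance setoidLFO (d : ℕ) : LocallyFiniteOrder (Setoid (Fin d)) :=
  Fintype.toLocallyFiniteOrder

/-- The Möbius function of the lattice of set partitions, with values in `ℚ`. -/
noncomputable def muS {d : ℕ} (a b : Setoid (Fin d)) : ℚ :=
  IncidenceAlgebra.mu ℚ a b

/-- Falling factorial `⟨m⟩_i = m(m-1)⋯(m-i+1)` as a rational number. -/
def ffact (m i : ℕ) : ℚ := ∏ j ∈ Finset.range i, ((m : ℚ) - j)

/-- Rising factorial `(b)_i = b(b+1)⋯(b+i-1)` as a rational number. -/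
def rfact (b i : ℕ) : ℚ := ∏ j ∈ Finset.range i, ((b : ℚ) + j)

/-- The path `P_{n+1}` with edges `v_i v_{i+1}`. -/
def pathEnds (n : ℕ) : Fin n → Sym2 (Fin (n + 1)) :=
  fun e => s(e.castSucc, e.succ)

/-- The cycle `C_{n+1}` with edges `v_i v_{i+1}` (indices mod `n+1`). -/
def cycleEnds (n : ℕ) : Fin (n + 1) → Sym2 (Fin (n + 1)) :=
  fun i => s(i, i + 1)

/-- The commutative chromatic symmetric function `X_G` in `N` variables. -/
noncomputable def Xcomm {d : ℕ} {ε : Type*} (ends : ε → Sym2 (Fin d)) (N : ℕ) :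
    MvPolynomial (Fin N) ℚ :=
  ∑ κ : Fin d → Fin N, if Proper ends κ then ∏ i, MvPolynomial.X (κ i) else 0

section Orientations

variable {V : Type*} {ε : Type*}

/-- `o` is an orientation of the graph with edge endpoints `ends`. -/
def IsOrient (ends : ε → Sym2 V) (o : ε → V × V) : Prop :=
  ∀ e, s((o e).1, (o e).2) = ends e

/-- An orientation is acyclic when it admits no directed cycle. -/
def Acyclic (o : ε → V × V) : Prop :=
  ∀ v : V, ¬ Relation.TransGen (fun a b => ∃ e, o e = (a, b)) v v

/-- `v` is a sink: every edge incident to `v` is directed toward `v`. -/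
def IsSink (o : ε → V × V) (v : V) : Prop := ∀ e, (o e).1 ≠ v

/-- The set of acyclic orientations with unique sink `v₀`. -/
def Aset (ends : ε → Sym2 V) (v₀ : V) : Set (ε → V × V) :=
  {o | IsOrient ends o ∧ Acyclic o ∧ IsSink o v₀ ∧ ∀ v, IsSink o v → v = v₀}

end Orientations

/-- A circuit: a closed walk `u_0, u_1, …, u_m, u_0` with distinct vertices and
distinct edges. -/
structure Circuit {d : ℕ} {ε : Type*} (ends : ε → Sym2 (Fin d)) where
  m : ℕ
  v : Fin (m + 1) → Fin d
  f : Fin (m + 1) → ε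
  hv : Function.Injective v
  hf : Function.Injective f
  he : ∀ k, ends (f k) = s(v k, v (k + 1))

/-- The broken circuit obtained from a circuit: its edge set with the largest
edge removed. -/
noncomputable def broken {d : ℕ} {ε : Type*} [LinearOrder ε] {ends : ε → Sym2 (Fin d)}
    (C : Circuit ends) : Finset ε :=
  (Finset.univ.image C.f).erase
    ((Finset.univ.image C.f).max'
      ⟨C.f 0, Finset.mem_image_of_mem _ (Finset.mem_univ _)⟩)

/-- `P(α)`: partitions `τ ≤ π+(d+1)` whose blocks can be listed as `B_1,…,B_l`
with `|B_i| = α_i` and `d+1 ∈ B_1`. -/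
def Pset {d : ℕ} (π : Setoid (Fin (d + 1))) (l : ℕ) (α : Fin l → ℕ) :
    Set (Setoid (Fin (d + 2))) :=
  {τ | τ ≤ addLast π ∧ ∃ B : Fin l → Finset (Fin (d + 2)),
    (∀ x y, τ x y ↔ ∃ i, x ∈ B i ∧ y ∈ B i) ∧
    (∀ i j, i ≠ j → Disjoint (B i) (B j)) ∧
    (∀ i, (B i).card = α i) ∧
    ∃ hl : 0 < l, Fin.last (d + 1) ∈ B ⟨0, hl⟩}

/-- `G + K_{m+1}` : attach a complete graph on `{v_{d}, v_{d+1}, …, v_{d+m}}`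
(`m` new vertices) to the last vertex of a graph `G` on `d+1` vertices. -/
def attachEnds {d : ℕ} {ε : Type*} (ends : ε → Sym2 (Fin (d + 1))) (m : ℕ) :
    ε ⊕ {p : Fin (m + 1) × Fin (m + 1) // p.1 < p.2} → Sym2 (Fin (d + 1 + m))
  | Sum.inl e => (ends e).map (fun x : Fin (d + 1) => (⟨(x : ℕ), by omega⟩ : Fin (d + 1 + m)))
  | Sum.inr p => s(⟨d + (p.1.1 : ℕ), by omega⟩, ⟨d + (p.1.2 : ℕ), by omega⟩)

/-- The disjoint union `G ⊎ K_m`, with the clique on the `m` new vertices. -/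
def disjEnds {d : ℕ} {ε : Type*} (ends : ε → Sym2 (Fin d)) (m : ℕ) :
    ε ⊕ {p : Fin m × Fin m // p.1 < p.2} → Sym2 (Fin (d + m))
  | Sum.inl e => (ends e).map (Fin.castAdd m)
  | Sum.inr p => s(Fin.natAdd d p.1.1, Fin.natAdd d p.1.2)

/-- Deletion-Contraction: for `e = v_{d-1} v_d`,
`Y_G = Y_{G∖e} - (Y_{G/e})↑`, the contracted vertex being labeled `v_{d-1}`. -/
theorem deletion_contraction {d : ℕ} {ε : Type*} (ends : ε → Sym2 (Fin (d + 2))) (e₀ : ε)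
    (he : ends e₀ = s((⟨d, by omega⟩ : Fin (d + 2)), Fin.last (d + 1))) :
    Y ends =
      Y (fun e : {e : ε // e ≠ e₀} => ends e.1)
        - up (Y (fun e : {e : ε // e ≠ e₀} => (ends e.1).map collapse)) := by
  funext w
  simp only [Pi.sub_apply, Y, up]
  by_cases h : w (Fin.last (d + 1)) = w ⟨d, by omega⟩
  · rw [if_pos h]
    have key : ∀ i : Fin (d + 2), w (Fin.castSucc (collapse i)) = w i := by
      intro i
      unfold collapse
      by_cases hi : (i : ℕ) < d + 1
      · rw [dif_pos hi]
        exact congrArg w (Fin.ext rfl)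
      · rw [dif_neg hi]
        have hil : i = Fin.last (d + 1) := Fin.ext (by simp only [Fin.val_last]; omega)
        have hc : (⟨d, by omega⟩ : Fin (d + 1)).castSucc = (⟨d, by omega⟩ : Fin (d + 2)) :=
          Fin.ext rfl
        rw [hil, hc]
        exact h.symm
    have hnot : ¬ Proper ends w := by
      intro hp
      exact hp e₀ _ _ he (by rw [h])
    rw [if_neg hnot]
    have hiff : Proper (fun e : {e : ε // e ≠ e₀} => ends e.1) w ↔
        Proper (fun e : {e : ε // e ≠ e₀} => (ends e.1).map collapse)
          (fun i => w i.castSucc) := by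
      constructor
      · intro hp e i j hij
        obtain ⟨⟨a, b⟩, hab⟩ := Quot.exists_rep (ends e.1)
        have hab' : ends e.1 = s(a, b) := hab.symm
        have hij2 : Sym2.map collapse (ends e.1) = s(i, j) := hij
        rw [hab', Sym2.map_pair_eq, Sym2.eq_iff] at hij2
        have hw := hp e a b hab'
        show w i.castSucc ≠ w j.castSucc
        rcases hij2 with ⟨h1, h2⟩ | ⟨h1, h2⟩
        · simpa only [← h1, ← h2, key] using hw
        · simpa only [← h1, ← h2, key] using fun hc => hw hc.symm
      · intro hp e i j hij
        have hij2 : ends e.1 = s(i, j) := hij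
        have := hp e (collapse i) (collapse j)
          (show Sym2.map collapse (ends e.1) = _ by rw [hij2, Sym2.map_pair_eq])
        simpa only [key] using this
    by_cases hp : Proper (fun e : {e : ε // e ≠ e₀} => ends e.1) w
    · rw [if_pos hp, if_pos (hiff.mp hp)]; ring
    · rw [if_neg hp, if_neg (fun hc => hp (hiff.mpr hc))]; ring
  · rw [if_neg h, sub_zero]
    have hiff : Proper ends w ↔ Proper (fun e : {e : ε // e ≠ e₀} => ends e.1) w := by
      constructor
      · intro hp e i j hij
        exact hp e.1 i j hij
      · intro hp e i j hij
        by_cases hee : e = e₀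
        · subst hee
          rw [he, Sym2.eq_iff] at hij
          rcases hij with ⟨h1, h2⟩ | ⟨h1, h2⟩
          · rw [← h1, ← h2]; exact fun hc => h hc.symm
          · rw [← h1, ← h2]; exact h
        · exact hp ⟨e, hee⟩ i j hij
    by_cases hp : Proper ends w
    · rw [if_pos hp, if_pos (hiff.mp hp)]
    · rw [if_neg hp, if_neg (fun hc => hp (hiff.mpr hc))]
end

section
/- For any graph G on d vertices, Y_G = Σ_{S ⊆ E(G)} (−1)^{|S|} p_{π(S)}, where π(S) is the set partition of [d] given by the connected components of the spanning subgraph (V(G), S), and p_π is the noncommutative power sum symmetric function. -/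
open Finset

attribute [local instance] Classical.propDecidable

/-- Power sum expansion: `Y_G = Σ_{S ⊆ E} (-1)^{|S|} p_{π(S)}`. -/
theorem Y_eq_sum_powerSum {d : ℕ} {ε : Type*} [Fintype ε] (ends : ε → Sym2 (Fin d)) :
    Y ends = ∑ S : Finset ε, ((-1 : ℚ) ^ S.card) • pFun (components ends S) := by
  classical
  funext w
  simp only [Y, Finset.sum_apply, Pi.smul_apply, pFun, smul_eq_mul, mul_ite, mul_one, mul_zero]
  set M : Finset ε := Finset.univ.filter (fun e => ∀ i j, ends e = s(i, j) → w i = w j) with hM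
  have hcond : ∀ S : Finset ε,
      (∀ i j, (components ends S) i j → w i = w j) ↔ S ⊆ M := by
    intro S
    constructor
    · intro h e heS
      simp only [hM, Finset.mem_filter, Finset.mem_univ, true_and]
      intro i j hij
      exact h i j (Relation.EqvGen.rel _ _ ⟨e, heS, hij⟩)
    · intro hS i j hij
      induction hij with
      | rel x y hxy =>
        obtain ⟨e, he, hend⟩ := hxy
        have := hS he
        simp only [hM, Finset.mem_filter, Finset.mem_univ, true_and] at this
        exact this x y hend
      | refl => rfl
      | symm x y _ ih => exact ih.symm
      | trans x y z _ _ ih1 ih2 => exact ih1.trans ih2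
  have hterm : ∀ S : Finset ε,
      (if (∀ i j, (components ends S) i j → w i = w j) then ((-1 : ℚ) ^ S.card) else 0)
        = if S ∈ M.powerset then ((-1 : ℚ) ^ S.card) else 0 := by
    intro S
    simp [hcond S, Finset.mem_powerset]
  rw [Finset.sum_congr rfl (fun S _ => hterm S), Finset.sum_ite_mem, Finset.univ_inter]
  have key : ∑ m ∈ M.powerset, ((-1 : ℚ)) ^ m.card = if M = ∅ then 1 else 0 := by
    have h := Finset.sum_powerset_neg_one_pow_card (x := M)
    have h2 : ((∑ m ∈ M.powerset, (-1 : ℤ) ^ m.card : ℤ) : ℚ)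
        = ∑ m ∈ M.powerset, ((-1 : ℚ)) ^ m.card := by push_cast; rfl
    rw [← h2, h]; split <;> norm_num
  rw [key]
  have hprop : Proper ends w ↔ M = ∅ := by
    constructor
    · intro hp
      rw [Finset.eq_empty_iff_forall_notMem]
      intro e he
      simp only [hM, Finset.mem_filter, Finset.mem_univ, true_and] at he
      obtain ⟨⟨a, b⟩, hab⟩ := (ends e).exists_rep
      exact hp e a b hab.symm (he a b hab.symm)
    · intro hMe e i j hij hw
      have : e ∈ M := by
        simp only [hM, Finset.mem_filter, Finset.mem_univ, true_and]
        intro a b hab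
        rw [hij] at hab
        rcases Sym2.eq_iff.mp hab with ⟨rfl, rfl⟩ | ⟨rfl, rfl⟩
        · exact hw
        · exact hw.symm
      simp [hMe] at this
  simp [hprop]
end

section
/- Fix a total order on the edges of a graph G on d vertices. Then Y_G = Σ_{S ∈ B_G} (−1)^{|S|} p_{π(S)}, where B_G is the broken circuit complex of G (the collection of edge subsets containing no broken circuit) and π(S) is the partition into connected components of the spanning subgraph induced by S. -/
open Finset

attribute [local instance] Classical.propDecidable

section WhitneyAux

variable {d : ℕ} {ε : Type*}

/-- An edge is monochromatic under the coloring `w`. -/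
def Mono (ends : ε → Sym2 (Fin d)) (w : Fin d → ℕ) (e : ε) : Prop :=
  ∀ i j, ends e = s(i, j) → w i = w j

lemma sym2_rep (z : Sym2 (Fin d)) : ∃ i j, z = s(i, j) :=
  Sym2.ind (fun x y => ⟨x, y, rfl⟩) z

lemma proper_iff_mono (ends : ε → Sym2 (Fin d)) (w : Fin d → ℕ) :
    Proper ends w ↔ ∀ e, ¬ Mono ends w e := by
  constructor
  · intro h e hm
    obtain ⟨i, j, hij⟩ := sym2_rep (ends e)
    exact h e i j hij (hm i j hij)
  · intro h e i j hij hw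
    apply h e
    intro a b hab
    rw [hij, Sym2.eq_iff] at hab
    rcases hab with ⟨rfl, rfl⟩ | ⟨rfl, rfl⟩
    · exact hw
    · exact hw.symm

lemma components_mono_iff (ends : ε → Sym2 (Fin d)) (S : Finset ε) (w : Fin d → ℕ) :
    (∀ i j, (components ends S) i j → w i = w j) ↔ ∀ e ∈ S, Mono ends w e := by
  constructor
  · intro h e he i j hij
    exact h i j (Relation.EqvGen.rel i j ⟨e, he, hij⟩)
  · intro h i j hij
    have hij' : Relation.EqvGen (fun i j => ∃ e ∈ S, ends e = s(i, j)) i j := hij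
    clear hij
    induction hij' with
    | rel a b hab => obtain ⟨e, he, hends⟩ := hab; exact h e he a b hends
    | refl => rfl
    | symm _ _ _ ih => exact ih.symm
    | trans _ _ _ _ _ ih1 ih2 => exact ih1.trans ih2

lemma pFun_eval (ends : ε → Sym2 (Fin d)) (S : Finset ε) (w : Fin d → ℕ) :
    pFun (components ends S) w = if ∀ e ∈ S, Mono ends w e then 1 else 0 := by
  unfold pFun
  exact if_congr (components_mono_iff ends S w) rfl rfl

open Fin.NatCast Fin.CommRing in
lemma cycle_mono {m : ℕ} (v : Fin (m + 1) → Fin d) (w : Fin d → ℕ) (k0 : Fin (m + 1))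
    (h : ∀ k, k ≠ k0 → w (v k) = w (v (k + 1))) : w (v k0) = w (v (k0 + 1)) := by
  have aux : ∀ j : ℕ, j ≤ m → w (v (k0 + 1 + (j : Fin (m + 1)))) = w (v (k0 + 1)) := by
    intro j
    induction j with
    | zero => intro _; simp
    | succ j ih =>
      intro hj
      have hne : k0 + 1 + (j : Fin (m + 1)) ≠ k0 := by
        intro hEq
        rw [add_assoc] at hEq
        have h2 : (1 : Fin (m + 1)) + (j : Fin (m + 1)) = 0 := by
          have := hEq.trans (add_zero k0).symm
          exact add_left_cancel this
        have h3 : ((j + 1 : ℕ) : Fin (m + 1)) = 0 := by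
          have hc : ((j + 1 : ℕ) : Fin (m + 1)) = 1 + (j : Fin (m + 1)) := by
            push_cast; ring
          rw [hc]; exact h2
        rw [Fin.natCast_eq_zero] at h3
        have := Nat.le_of_dvd (by omega) h3
        omega
      have hstep := h _ hne
      have hc : k0 + 1 + (j : Fin (m + 1)) + 1 = k0 + 1 + ((j + 1 : ℕ) : Fin (m + 1)) := by
        push_cast; ring
      rw [hc] at hstep
      rw [← hstep]
      exact ih (by omega)
  have hm := aux m le_rfl
  have hcast : k0 + 1 + (m : Fin (m + 1)) = k0 := by
    have hz : ((m + 1 : ℕ) : Fin (m + 1)) = 0 := by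
      rw [Fin.natCast_eq_zero]
    rw [add_assoc]
    have h1 : (1 : Fin (m + 1)) + (m : Fin (m + 1)) = 0 := by
      have hc : ((m + 1 : ℕ) : Fin (m + 1)) = 1 + (m : Fin (m + 1)) := by
        push_cast; ring
      rw [← hc]; exact hz
    rw [h1, add_zero]
  rw [hcast] at hm
  exact hm

lemma broken_nonempty [Fintype ε] [LinearOrder ε] {ends : ε → Sym2 (Fin d)} (w : Fin d → ℕ)
    (hM : ∀ e, ¬ Mono ends w e) (C : Circuit ends) : (broken C).Nonempty := by
  have hFne : (Finset.univ.image C.f).Nonempty :=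
    ⟨C.f 0, Finset.mem_image_of_mem _ (Finset.mem_univ _)⟩
  have hcard : (Finset.univ.image C.f).card = C.m + 1 := by
    rw [Finset.card_image_of_injective _ C.hf, Finset.card_univ, Fintype.card_fin]
  rcases Nat.eq_zero_or_pos C.m with h0 | hpos
  · exfalso
    apply hM (C.f 0)
    intro i j hij
    have h01 : ((0 : Fin (C.m + 1)) + 1) = 0 := by
      ext
      simp [Fin.add_def, h0]
    rw [C.he 0, h01, Sym2.eq_iff] at hij
    rcases hij with ⟨rfl, rfl⟩ | ⟨rfl, rfl⟩ <;> rfl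
  · rw [← Finset.card_pos]
    unfold broken
    show 0 < ((Finset.univ.image C.f).erase ((Finset.univ.image C.f).max' hFne)).card
    rw [Finset.card_erase_of_mem (Finset.max'_mem _ _), hcard]
    omega

lemma nbc_insert [Fintype ε] [LinearOrder ε] {ends : ε → Sym2 (Fin d)} (w : Fin d → ℕ)
    (S : Finset ε) (hS : ∀ e ∈ S, Mono ends w e)
    (e0 : ε) (he0 : Mono ends w e0) (hmax : ∀ e, Mono ends w e → e ≤ e0)
    (hNBC : ∀ C : Circuit ends, ¬ broken C ⊆ S)
    (C : Circuit ends) (hsub : broken C ⊆ insert e0 S) : False := by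
  have hFne : (Finset.univ.image C.f).Nonempty :=
    ⟨C.f 0, Finset.mem_image_of_mem _ (Finset.mem_univ _)⟩
  obtain ⟨kstar, -, hkstar⟩ := Finset.mem_image.mp ((Finset.univ.image C.f).max'_mem hFne)
  have hbro : broken C = (Finset.univ.image C.f).erase (C.f kstar) := by
    unfold broken
    rw [hkstar]
  -- e0 must lie in the broken circuit
  have he0mem : e0 ∈ broken C := by
    by_contra h
    apply hNBC C
    intro x hx
    rcases Finset.mem_insert.mp (hsub hx) with rfl | hx'
    · exact absurd hx h
    · exact hx'
  -- every edge of the circuit other than the max is monochromatic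
  have hmono : ∀ k, C.f k ≠ C.f kstar → Mono ends w (C.f k) := by
    intro k hk
    have hmem : C.f k ∈ broken C := by
      rw [hbro]
      exact Finset.mem_erase.mpr ⟨hk, Finset.mem_image_of_mem _ (Finset.mem_univ _)⟩
    rcases Finset.mem_insert.mp (hsub hmem) with heq | hmem'
    · rw [heq]; exact he0
    · exact hS _ hmem'
  -- the cycle forces the max edge to be monochromatic too
  have hcyc : w (C.v kstar) = w (C.v (kstar + 1)) := by
    apply cycle_mono
    intro k hk
    exact hmono k (fun h => hk (C.hf h)) _ _ (C.he k)
  have hfmono : Mono ends w (C.f kstar) := by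
    intro i j hij
    rw [C.he kstar, Sym2.eq_iff] at hij
    rcases hij with ⟨rfl, rfl⟩ | ⟨rfl, rfl⟩
    · exact hcyc
    · exact hcyc.symm
  -- contradiction: e0 < C.f kstar ≤ e0
  rw [hbro, Finset.mem_erase] at he0mem
  have hle : e0 ≤ C.f kstar := by
    rw [hkstar]
    exact Finset.le_max' _ e0 he0mem.2
  have hlt : e0 < C.f kstar := lt_of_le_of_ne hle he0mem.1
  exact absurd (hmax _ hfmono) (not_le.mpr hlt)

end WhitneyAux

/-- Whitney-type theorem: `Y_G = Σ_{S ∈ B_G} (-1)^{|S|} p_{π(S)}` where `B_G`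
is the broken circuit complex for a fixed total order on the edges. -/
theorem Y_eq_sum_brokenCircuit {d : ℕ} {ε : Type*} [Fintype ε] [LinearOrder ε]
    (ends : ε → Sym2 (Fin d)) :
    Y ends = ∑ S : Finset ε,
      if (∀ C : Circuit ends, ¬ broken C ⊆ S) then
        ((-1 : ℚ) ^ S.card) • pFun (components ends S)
      else 0 := by
  funext w
  set M : Finset ε := Finset.univ.filter (Mono ends w) with hMdef
  have hMem : ∀ e, e ∈ M ↔ Mono ends w e := by
    intro e; simp [hMdef]
  have hRHS : (∑ S : Finset ε,
      if (∀ C : Circuit ends, ¬ broken C ⊆ S) then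
        ((-1 : ℚ) ^ S.card) • pFun (components ends S) else 0) w
      = ∑ S ∈ Finset.univ.filter (fun S : Finset ε =>
          (∀ C : Circuit ends, ¬ broken C ⊆ S) ∧ S ⊆ M), (-1 : ℚ) ^ S.card := by
    rw [Finset.sum_apply, Finset.sum_filter]
    apply Finset.sum_congr rfl
    intro S _
    by_cases h1 : ∀ C : Circuit ends, ¬ broken C ⊆ S
    · simp only [h1, if_true, true_and, Pi.smul_apply, smul_eq_mul]
      by_cases h2 : S ⊆ M
      · have hmono : ∀ e ∈ S, Mono ends w e := fun e he => (hMem e).1 (h2 he)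
        have hp : pFun (components ends S) w = 1 := by
          rw [pFun_eval]; exact if_pos hmono
        simp [h2, hp]
      · have hnm : ¬ ∀ e ∈ S, Mono ends w e :=
          fun h => h2 (fun e he => (hMem e).2 (h e he))
        have hp : pFun (components ends S) w = 0 := by
          rw [pFun_eval]; exact if_neg hnm
        simp [h2, hp]
    · simp [h1]
  rw [hRHS]
  show (if Proper ends w then (1 : ℚ) else 0) = _
  by_cases hMe : M = ∅
  · have hnomono : ∀ e, ¬ Mono ends w e := by
      intro e hm
      have : e ∈ M := (hMem e).2 hm
      simp [hMe] at this
    have hprop : Proper ends w := (proper_iff_mono _ _).2 hnomono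
    have hfilter : Finset.univ.filter (fun S : Finset ε =>
        (∀ C : Circuit ends, ¬ broken C ⊆ S) ∧ S ⊆ M) = {∅} := by
      ext S
      simp only [Finset.mem_filter, Finset.mem_univ, true_and, Finset.mem_singleton, hMe,
        Finset.subset_empty]
      constructor
      · rintro ⟨-, h⟩; exact h
      · rintro rfl
        refine ⟨fun C hC => ?_, rfl⟩
        have hne := broken_nonempty w hnomono C
        rw [Finset.subset_empty] at hC
        rw [hC] at hne
        exact absurd hne (by simp)
    rw [hfilter]
    simp [hprop]
  · have hMne : M.Nonempty := Finset.nonempty_iff_ne_empty.mpr hMe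
    have hprop : ¬ Proper ends w := fun hP =>
      (proper_iff_mono ends w).1 hP hMne.choose ((hMem _).1 hMne.choose_spec)
    rw [if_neg hprop]
    set e0 := M.max' hMne with he0def
    have he0M : Mono ends w e0 := (hMem e0).1 (M.max'_mem hMne)
    have hmax : ∀ e, Mono ends w e → e ≤ e0 := fun e he => M.le_max' e ((hMem e).2 he)
    symm
    apply Finset.sum_involution
      (g := fun S (_ : S ∈ Finset.univ.filter (fun S : Finset ε =>
          (∀ C : Circuit ends, ¬ broken C ⊆ S) ∧ S ⊆ M)) =>
        if e0 ∈ S then S.erase e0 else insert e0 S)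
    · -- sums to zero
      intro S hS
      by_cases h : e0 ∈ S
      · simp only [h, if_true]
        have hc : (S.erase e0).card + 1 = S.card := Finset.card_erase_add_one h
        rw [← hc, pow_succ]
        ring
      · simp only [h, if_false]
        have hc : (insert e0 S).card = S.card + 1 := Finset.card_insert_of_notMem h
        rw [hc, pow_succ]
        ring
    · -- not fixed
      intro S hS _
      by_cases h : e0 ∈ S
      · simp only [h, if_true]
        intro hEq
        have : e0 ∈ S.erase e0 := hEq.symm ▸ h
        exact absurd this (Finset.notMem_erase _ _)
      · simp only [h, if_false]
        intro hEq
        exact h (hEq ▸ Finset.mem_insert_self e0 S)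
    · -- stays in the set
      intro S hS
      rw [Finset.mem_filter] at hS ⊢
      obtain ⟨-, hNBC, hSM⟩ := hS
      refine ⟨Finset.mem_univ _, ?_⟩
      by_cases h : e0 ∈ S
      · simp only [h, if_true]
        refine ⟨fun C hC => hNBC C (hC.trans (Finset.erase_subset _ _)), ?_⟩
        exact (Finset.erase_subset _ _).trans hSM
      · simp only [h, if_false]
        refine ⟨fun C hC => ?_, Finset.insert_subset ((hMem e0).2 he0M) hSM⟩
        exact nbc_insert w S (fun e he => (hMem e).1 (hSM he)) e0 he0M hmax hNBC C hC
    · -- involution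
      intro S hS
      by_cases h : e0 ∈ S
      · simp only [h, if_true]
        have h2 : e0 ∉ S.erase e0 := Finset.notMem_erase _ _
        simp only [h2, if_false]
        exact Finset.insert_erase h
      · simp only [h, if_false]
        have h2 : e0 ∈ insert e0 S := Finset.mem_insert_self _ _
        simp only [h2, if_true]
        exact Finset.erase_insert h
end

section
/- For any non-loop edge e = uv_0 of G, the map sending an acyclic orientation D of G with unique sink at v_0 to D∖e if D∖e has unique sink v_0, and to D/e otherwise, is a bijection between A(G, v_0) and the disjoint union A(G∖e, v_0) ⊎ A(G/e, v_0), where the contracted vertex of G/e is labeled v_0. -/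
open Finset

attribute [local instance] Classical.propDecidable

/-- The vertex map of the contraction `G/e` for `e = u v₀`: `u` is sent to the
merged vertex, labeled `v₀`. -/
noncomputable def contrV {V : Type*} (u v₀ : V) (h : u ≠ v₀) : V → {x : V // x ≠ u} :=
  fun x => if hx : x = u then ⟨v₀, Ne.symm h⟩ else ⟨x, hx⟩

section Test

private lemma no_cycle_lift {α β : Type*} {r : α → α → Prop} {s : β → β → Prop}
    {f : α → β} {P : α → Prop}
    (hsrc : ∀ ⦃a b⦄, r a b → P a)
    (hstep : ∀ ⦃a b⦄, r a b → P b → s (f a) (f b))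
    (hs : ∀ v, ¬ Relation.TransGen s v v) : ∀ v, ¬ Relation.TransGen r v v := by
  have lift : ∀ {a b}, Relation.TransGen r a b → P b →
      Relation.TransGen s (f a) (f b) := by
    intro a b h
    induction h with
    | single h => exact fun hb => Relation.TransGen.single (hstep h hb)
    | tail h h' ih => exact fun hb => (ih (hsrc h')).tail (hstep h' hb)
  intro v hv
  have hsrc' : ∀ {a b : α}, Relation.TransGen r a b → P a := by
    intro a b h
    induction h with
    | single h => exact hsrc h
    | tail _ _ ih => exact ih
  exact hs (f v) (lift hv (hsrc' hv))

variable {V ε : Type*} {ends : ε → Sym2 V} {e₀ : ε} {u v₀ : V}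

private lemma contrV_ne {u v₀ : V} (hu : u ≠ v₀) {x : V} (hx : x ≠ u) :
    contrV u v₀ hu x = ⟨x, hx⟩ := by unfold contrV; rw [dif_neg hx]

private lemma contrV_u {u v₀ : V} (hu : u ≠ v₀) :
    contrV u v₀ hu u = ⟨v₀, Ne.symm hu⟩ := by unfold contrV; rw [dif_pos rfl]

private lemma contrV_val_ne (hu : u ≠ v₀) {x : V} (hx : x ≠ u) (hx' : x ≠ v₀) :
    (contrV u v₀ hu x).1 ≠ v₀ := by
  rw [contrV_ne hu hx]; exact hx'

private lemma eq_of_contrV_val_ne (hu : u ≠ v₀) {x : V}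
    (h : (contrV u v₀ hu x).1 ≠ v₀) : (contrV u v₀ hu x).1 = x := by
  by_cases hx : x = u
  · subst hx; rw [contrV_u] at h ⊢; exact absurd rfl h
  · rw [contrV_ne hu hx]

-- o e₀ = (u, v₀) when o ∈ Aset
private lemma o_e0 (he : ends e₀ = s(u, v₀)) (hu : u ≠ v₀)
    {o : ε → V × V} (ho : o ∈ Aset ends v₀) : o e₀ = (u, v₀) := by
  obtain ⟨h1, -, h3, -⟩ := ho
  have := h1 e₀
  rw [he, Sym2.eq_iff] at this
  rcases this with ⟨ha, hb⟩ | ⟨ha, hb⟩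
  · exact Prod.ext ha hb
  · exact absurd ha (h3 e₀)

end Test

section Main

variable {V ε : Type*} {ends : ε → Sym2 V} {e₀ : ε} {u v₀ : V}

private lemma del_mem_parts {o : ε → V × V} (ho : o ∈ Aset ends v₀) :
    IsOrient (fun e : {e : ε // e ≠ e₀} => ends e.1) (fun e : {e : ε // e ≠ e₀} => o e.1) ∧
    Acyclic (fun e : {e : ε // e ≠ e₀} => o e.1) ∧
    IsSink (fun e : {e : ε // e ≠ e₀} => o e.1) v₀ := by
  obtain ⟨h1, h2, h3, -⟩ := ho
  refine ⟨fun e => h1 e.1, ?_, fun e => h3 e.1⟩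
  intro v hv
  exact h2 v (Relation.TransGen.mono (fun a b ⟨e', h⟩ => ⟨e'.1, h⟩) v v hv)

private lemma sink_u (he : ends e₀ = s(u, v₀)) (hu : u ≠ v₀)
    {o : ε → V × V} (ho : o ∈ Aset ends v₀)
    (hnot : (fun e : {e : ε // e ≠ e₀} => o e.1) ∉
      Aset (fun e : {e : ε // e ≠ e₀} => ends e.1) v₀) :
    IsSink (fun e : {e : ε // e ≠ e₀} => o e.1) u := by
  obtain ⟨p1, p2, p3⟩ := del_mem_parts (e₀ := e₀) ho
  have hnu : ¬ ∀ v, IsSink (fun e : {e : ε // e ≠ e₀} => o e.1) v → v = v₀ :=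
    fun h => hnot ⟨p1, p2, p3, h⟩
  push_neg at hnu
  obtain ⟨v, hv, hvne⟩ := hnu
  have hvu : v = u := by
    have : ¬ IsSink o v := fun h => hvne (ho.2.2.2 v h)
    unfold IsSink at this
    push_neg at this
    obtain ⟨e, hev⟩ := this
    by_cases h : e = e₀
    · subst h; rw [o_e0 he hu ho] at hev; exact hev.symm
    · exact absurd hev (hv ⟨e, h⟩)
  exact hvu ▸ hv

private lemma ctr_mem (he : ends e₀ = s(u, v₀)) (hu : u ≠ v₀)
    {o : ε → V × V} (ho : o ∈ Aset ends v₀)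
    (hsink : IsSink (fun e : {e : ε // e ≠ e₀} => o e.1) u) :
    (fun e : {e : ε // e ≠ e₀} =>
        (contrV u v₀ hu (o e.1).1, contrV u v₀ hu (o e.1).2)) ∈
      Aset (fun e : {e : ε // e ≠ e₀} => (ends e.1).map (contrV u v₀ hu))
        ⟨v₀, Ne.symm hu⟩ := by
  obtain ⟨h1, h2, h3, h4⟩ := ho
  have hne1 : ∀ e : {e : ε // e ≠ e₀}, (o e.1).1 ≠ u := fun e => hsink e
  have hfst : ∀ e : {e : ε // e ≠ e₀},
      contrV u v₀ hu (o e.1).1 = ⟨(o e.1).1, hne1 e⟩ := fun e => contrV_ne hu (hne1 e)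
  refine ⟨?_, ?_, ?_, ?_⟩
  · intro e
    dsimp only
    rw [← h1 e.1, Sym2.map_pair_eq]
  · refine no_cycle_lift (f := Subtype.val)
      (P := fun x' : {x : V // x ≠ u} => x'.1 ≠ v₀) ?_ ?_ h2
    · rintro x' y' ⟨e, hxy⟩
      dsimp only at hxy
      have : x' = contrV u v₀ hu (o e.1).1 := (congrArg Prod.fst hxy).symm
      rw [this, hfst e]
      exact h3 e.1
    · rintro x' y' ⟨e, hxy⟩ hy
      dsimp only at hxy
      have hx : x' = contrV u v₀ hu (o e.1).1 := (congrArg Prod.fst hxy).symm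
      have hy' : y' = contrV u v₀ hu (o e.1).2 := (congrArg Prod.snd hxy).symm
      have hb : (o e.1).2 ≠ u := by
        intro hbu
        rw [hy', hbu, contrV_u] at hy
        exact hy rfl
      refine ⟨e.1, ?_⟩
      rw [hx, hfst e, hy', contrV_ne hu hb]
  · intro e hc
    dsimp only at hc
    have := hfst e
    rw [this] at hc
    exact h3 e.1 (congrArg Subtype.val hc)
  · rintro ⟨v, hvu⟩ hv
    by_contra hne
    have hvv0 : v ≠ v₀ := fun h => hne (Subtype.ext h)
    have : ¬ IsSink o v := fun h => hvv0 (h4 v h)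
    unfold IsSink at this
    push_neg at this
    obtain ⟨e, hev⟩ := this
    by_cases h : e = e₀
    · subst h; rw [o_e0 he hu ⟨h1, h2, h3, h4⟩] at hev; exact hvu hev.symm
    · exact hv ⟨e, h⟩ (by dsimp only; rw [hfst ⟨e, h⟩]; exact Subtype.ext hev)

private lemma ext_spec (he : ends e₀ = s(u, v₀)) (hu : u ≠ v₀)
    {o' : {e : ε // e ≠ e₀} → V × V}
    (ho' : o' ∈ Aset (fun e : {e : ε // e ≠ e₀} => ends e.1) v₀) :
    ∃ o ∈ Aset ends v₀, (fun e : {e : ε // e ≠ e₀} => o e.1) = o' := by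
  classical
  obtain ⟨h1, h2, h3, h4⟩ := ho'
  set o : ε → V × V := fun e => if h : e = e₀ then (u, v₀) else o' ⟨e, h⟩ with ho_def
  have hdel : (fun e : {e : ε // e ≠ e₀} => o e.1) = o' := by
    funext e'
    simp only [ho_def, dif_neg e'.2]
  have hsink : IsSink o v₀ := by
    intro e
    by_cases h : e = e₀
    · subst h; simp only [ho_def, dif_pos rfl]; exact hu
    · simp only [ho_def, dif_neg h]; exact h3 ⟨e, h⟩
  refine ⟨o, ⟨?_, ?_, hsink, ?_⟩, hdel⟩
  · intro e
    by_cases h : e = e₀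
    · subst h; simp only [ho_def, dif_pos rfl]; exact he.symm
    · simp only [ho_def, dif_neg h]; exact h1 ⟨e, h⟩
  · refine no_cycle_lift (f := id) (P := fun b => b ≠ v₀) ?_ ?_ h2
    · rintro a b ⟨e, hab⟩
      intro hav
      exact hsink e (by rw [hab, hav])
    · rintro a b ⟨e, hab⟩ hb
      by_cases h : e = e₀
      · subst h
        simp only [ho_def, dif_pos rfl] at hab
        exact absurd (congrArg Prod.snd hab).symm hb
      · exact ⟨⟨e, h⟩, by simp only [ho_def, dif_neg h] at hab ⊢; exact hab⟩
  · intro v hv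
    refine h4 v ?_
    intro e'
    have : o' e' = o e'.1 := by rw [← hdel]
    rw [this]
    exact hv e'.1

private lemma ctr_lift (he : ends e₀ = s(u, v₀)) (hu : u ≠ v₀)
    {ob : {e : ε // e ≠ e₀} → {x : V // x ≠ u} × {x : V // x ≠ u}}
    (hob : ob ∈ Aset (fun e : {e : ε // e ≠ e₀} => (ends e.1).map (contrV u v₀ hu))
      ⟨v₀, Ne.symm hu⟩) :
    ∃ o ∈ Aset ends v₀, IsSink (fun e : {e : ε // e ≠ e₀} => o e.1) u ∧
      (fun e : {e : ε // e ≠ e₀} =>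
        (contrV u v₀ hu (o e.1).1, contrV u v₀ hu (o e.1).2)) = ob := by
  classical
  obtain ⟨h1, h2, h3, h4⟩ := hob
  have hex : ∀ e' : {e : ε // e ≠ e₀}, ∃ ab : V × V, s(ab.1, ab.2) = ends e'.1 ∧
      contrV u v₀ hu ab.1 = (ob e').1 ∧ contrV u v₀ hu ab.2 = (ob e').2 := by
    intro e'
    obtain ⟨⟨p, q⟩, hpq⟩ := Quot.exists_rep (ends e'.1)
    have hpq' : ends e'.1 = s(p, q) := hpq.symm
    have := h1 e'
    dsimp only at this
    rw [hpq', Sym2.map_pair_eq] at this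
    rw [Sym2.eq_iff] at this
    rcases this with ⟨ha, hb⟩ | ⟨ha, hb⟩
    · exact ⟨(p, q), hpq'.symm, ha.symm, hb.symm⟩
    · exact ⟨(q, p), by rw [Sym2.eq_swap]; exact hpq'.symm, ha.symm, hb.symm⟩
  set o : ε → V × V := fun e =>
    if h : e = e₀ then (u, v₀) else Classical.choose (hex ⟨e, h⟩) with ho_def
  have hspec : ∀ e' : {e : ε // e ≠ e₀}, s((o e'.1).1, (o e'.1).2) = ends e'.1 ∧
      contrV u v₀ hu (o e'.1).1 = (ob e').1 ∧ contrV u v₀ hu (o e'.1).2 = (ob e').2 := by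
    intro e'
    have : o e'.1 = Classical.choose (hex e') := by
      simp only [ho_def, dif_neg e'.2]
    rw [this]
    exact Classical.choose_spec (hex e')
  have hane : ∀ e' : {e : ε // e ≠ e₀}, (o e'.1).1 ≠ u ∧ (o e'.1).1 ≠ v₀ := by
    intro e'
    have hsk := h3 e'
    rw [← (hspec e').2.1] at hsk
    constructor
    · intro hau
      rw [hau, contrV_u] at hsk
      exact hsk rfl
    · intro hav
      by_cases hau : (o e'.1).1 = u
      · rw [hau, contrV_u] at hsk; exact hsk rfl
      · rw [contrV_ne hu hau] at hsk
        exact hsk (Subtype.ext hav)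
  have hoe0 : o e₀ = (u, v₀) := by simp only [ho_def, dif_pos rfl]
  have hsinku : IsSink (fun e : {e : ε // e ≠ e₀} => o e.1) u := fun e' => (hane e').1
  have hsinkv : IsSink o v₀ := by
    intro e
    by_cases h : e = e₀
    · subst h; rw [hoe0]; exact hu
    · exact (hane ⟨e, h⟩).2
  have hctr : (fun e : {e : ε // e ≠ e₀} =>
      (contrV u v₀ hu (o e.1).1, contrV u v₀ hu (o e.1).2)) = ob := by
    funext e'
    exact Prod.ext (hspec e').2.1 (hspec e').2.2
  refine ⟨o, ⟨?_, ?_, hsinkv, ?_⟩, hsinku, hctr⟩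
  · intro e
    by_cases h : e = e₀
    · subst h; rw [hoe0]; exact he.symm
    · exact (hspec ⟨e, h⟩).1
  · refine no_cycle_lift (f := contrV u v₀ hu) (P := fun b => b ≠ v₀) ?_ ?_ h2
    · rintro a b ⟨e, hab⟩ hav
      exact hsinkv e (by rw [hab, hav])
    · rintro a b ⟨e, hab⟩ hb
      by_cases h : e = e₀
      · subst h
        rw [hoe0] at hab
        exact absurd (congrArg Prod.snd hab).symm hb
      · refine ⟨⟨e, h⟩, ?_⟩
        have h1' := (hspec ⟨e, h⟩).2.1
        have h2' := (hspec ⟨e, h⟩).2.2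
        have hae : o e = (a, b) := hab
        rw [hae] at h1' h2'
        exact Prod.ext h1'.symm h2'.symm
  · intro v hv
    by_contra hvv0
    have hvu : v ≠ u := by
      intro h
      exact hv e₀ (by rw [hoe0, h])
    have : IsSink ob ⟨v, hvu⟩ := by
      intro e'
      rw [← (hspec e').2.1]
      by_cases hau : (o e'.1).1 = u
      · exact absurd hau (hane e').1
      · rw [contrV_ne hu hau]
        intro hcontra
        exact hv e'.1 (congrArg Subtype.val hcontra)
    have := h4 _ this
    rw [Subtype.mk.injEq] at this
    exact hvv0 this

private lemma ctr_inj (he : ends e₀ = s(u, v₀)) (hu : u ≠ v₀)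
    {o₁ o₂ : ε → V × V} (h₁ : o₁ ∈ Aset ends v₀) (h₂ : o₂ ∈ Aset ends v₀)
    (hs₁ : IsSink (fun e : {e : ε // e ≠ e₀} => o₁ e.1) u)
    (hs₂ : IsSink (fun e : {e : ε // e ≠ e₀} => o₂ e.1) u)
    (hctr : (fun e : {e : ε // e ≠ e₀} =>
        (contrV u v₀ hu (o₁ e.1).1, contrV u v₀ hu (o₁ e.1).2)) =
      (fun e : {e : ε // e ≠ e₀} =>
        (contrV u v₀ hu (o₂ e.1).1, contrV u v₀ hu (o₂ e.1).2))) :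
    o₁ = o₂ := by
  funext e
  by_cases h : e = e₀
  · subst h; rw [o_e0 he hu h₁, o_e0 he hu h₂]
  · have hc := congrFun hctr ⟨e, h⟩
    dsimp only at hc
    have hc1 : contrV u v₀ hu (o₁ e).1 = contrV u v₀ hu (o₂ e).1 :=
      congrArg Prod.fst hc
    rw [contrV_ne hu (hs₁ ⟨e, h⟩), contrV_ne hu (hs₂ ⟨e, h⟩)] at hc1
    have hfst : (o₁ e).1 = (o₂ e).1 := congrArg Subtype.val hc1
    have he1 := h₁.1 e
    have he2 := h₂.1 e
    rw [← he2] at he1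
    rw [hfst, Sym2.eq_iff] at he1
    refine Prod.ext hfst ?_
    rcases he1 with ⟨-, hb⟩ | ⟨ha, hb⟩
    · exact hb
    · rw [hb, ha]

end Main

/-- The deletion-contraction bijection for acyclic orientations with a unique
sink: `D ↦ D∖e` if `D∖e ∈ A(G∖e, v₀)`, and `D ↦ D/e` otherwise, is a bijection
from `A(G, v₀)` onto `A(G∖e, v₀) ⊎ A(G/e, v₀)`. -/
theorem acyclicOrientation_bijOn {V : Type*} {ε : Type*} (ends : ε → Sym2 V)
    (e₀ : ε) (u v₀ : V) (hu : u ≠ v₀) (he : ends e₀ = s(u, v₀)) :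
    Set.BijOn
      (fun o : ε → V × V =>
        if (fun e : {e : ε // e ≠ e₀} => o e.1) ∈
            Aset (fun e : {e : ε // e ≠ e₀} => ends e.1) v₀ then
          Sum.inl (fun e : {e : ε // e ≠ e₀} => o e.1)
        else
          Sum.inr (fun e : {e : ε // e ≠ e₀} =>
            (contrV u v₀ hu (o e.1).1, contrV u v₀ hu (o e.1).2)))
      (Aset ends v₀)
      (Sum.inl '' Aset (fun e : {e : ε // e ≠ e₀} => ends e.1) v₀ ∪
        Sum.inr '' Aset (fun e : {e : ε // e ≠ e₀} => (ends e.1).map (contrV u v₀ hu))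
          ⟨v₀, Ne.symm hu⟩) := by
  classical
  refine ⟨?_, ?_, ?_⟩
  · intro o ho
    by_cases h : (fun e : {e : ε // e ≠ e₀} => o e.1) ∈
        Aset (fun e : {e : ε // e ≠ e₀} => ends e.1) v₀
    · dsimp only
      rw [if_pos h]
      exact Or.inl ⟨_, h, rfl⟩
    · dsimp only
      rw [if_neg h]
      exact Or.inr ⟨_, ctr_mem he hu ho (sink_u he hu ho h), rfl⟩
  · intro o₁ h₁ o₂ h₂ heq
    dsimp only at heq
    by_cases c₁ : (fun e : {e : ε // e ≠ e₀} => o₁ e.1) ∈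
        Aset (fun e : {e : ε // e ≠ e₀} => ends e.1) v₀ <;>
    by_cases c₂ : (fun e : {e : ε // e ≠ e₀} => o₂ e.1) ∈
        Aset (fun e : {e : ε // e ≠ e₀} => ends e.1) v₀
    · rw [if_pos c₁, if_pos c₂] at heq
      have hdel := Sum.inl.inj heq
      funext e
      by_cases h : e = e₀
      · subst h; rw [o_e0 he hu h₁, o_e0 he hu h₂]
      · exact congrFun hdel ⟨e, h⟩
    · rw [if_pos c₁, if_neg c₂] at heq
      exact (Sum.inl_ne_inr heq).elim
    · rw [if_neg c₁, if_pos c₂] at heq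
      exact (Sum.inr_ne_inl heq).elim
    · rw [if_neg c₁, if_neg c₂] at heq
      exact ctr_inj he hu h₁ h₂ (sink_u he hu h₁ c₁) (sink_u he hu h₂ c₂)
        (Sum.inr.inj heq)
  · intro y hy
    rcases hy with ⟨o', ho', rfl⟩ | ⟨ob, hob, rfl⟩
    · obtain ⟨o, ho, hdel⟩ := ext_spec he hu ho'
      refine ⟨o, ho, ?_⟩
      dsimp only
      rw [hdel, if_pos ho']
    · obtain ⟨o, ho, hsink, hctr⟩ := ctr_lift he hu hob
      refine ⟨o, ho, ?_⟩
      dsimp only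
      have hnot : (fun e : {e : ε // e ≠ e₀} => o e.1) ∉
          Aset (fun e : {e : ε // e ≠ e₀} => ends e.1) v₀ := by
        intro hmem
        exact hu (hmem.2.2.2 u hsink)
      rw [if_neg hnot, hctr]
end

section
/- In the partition lattice Π_{d+1}, the noncommutative elementary symmetric functions satisfy e_π↑ = Σ_{σ ≤ π} [μ(0̂,σ)/μ(0̂, σ+(d+1))] Σ_{τ ≤ σ+(d+1)} μ(τ, σ+(d+1)) e_τ for any π ∈ Π_d, where σ+(d+1) is σ with d+1 added to the block containing d, and μ is the Möbius function of the partition lattice. -/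
open Finset

attribute [local instance] Classical.propDecidable

section Weisner

variable {α : Type*} [PartialOrder α] [LocallyFiniteOrder α] [DecidableEq α]

lemma sum_ite_interval (f : α → ℚ) (lo hi : α) [Fintype α] :
    ∑ x : α, (if lo ≤ x ∧ x ≤ hi then f x else 0) = ∑ x ∈ Finset.Icc lo hi, f x := by
  rw [← Finset.sum_filter]
  congr 1
  ext x; simp [Finset.mem_Icc]

end Weisner

section Weisner2

variable {α : Type*} [Lattice α] [OrderBot α] [Fintype α] [LocallyFiniteOrder α] [DecidableEq α]

lemma weisner (a b : α) (ha : ⊥ < a) :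
    ∑ x : α, (if x ⊔ a = b then IncidenceAlgebra.mu ℚ ⊥ x else 0) = 0 := by
  calc ∑ x : α, (if x ⊔ a = b then IncidenceAlgebra.mu ℚ ⊥ x else 0)
      = ∑ x : α, ∑ y : α, (if x ⊔ a ≤ y ∧ y ≤ b then
          IncidenceAlgebra.mu ℚ ⊥ x * IncidenceAlgebra.mu ℚ y b else 0) := by
        refine Finset.sum_congr rfl fun x _ => ?_
        rw [sum_ite_interval, ← Finset.mul_sum, IncidenceAlgebra.sum_Icc_mu_left,
          mul_ite, mul_one, mul_zero]
    _ = ∑ y : α, ∑ x : α, (if x ⊔ a ≤ y ∧ y ≤ b then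
          IncidenceAlgebra.mu ℚ ⊥ x * IncidenceAlgebra.mu ℚ y b else 0) := Finset.sum_comm
    _ = 0 := by
        refine Finset.sum_eq_zero fun y _ => ?_
        by_cases hay : a ≤ y ∧ y ≤ b
        · have hiff : ∀ x : α, (x ⊔ a ≤ y ∧ y ≤ b) ↔ (⊥ ≤ x ∧ x ≤ y) := fun x =>
            ⟨fun h => ⟨bot_le, le_trans le_sup_left h.1⟩, fun h => ⟨sup_le h.2 hay.1, hay.2⟩⟩
          calc ∑ x : α, (if x ⊔ a ≤ y ∧ y ≤ b then
                IncidenceAlgebra.mu ℚ ⊥ x * IncidenceAlgebra.mu ℚ y b else 0)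
              = ∑ x : α, (if ⊥ ≤ x ∧ x ≤ y then
                IncidenceAlgebra.mu ℚ ⊥ x * IncidenceAlgebra.mu ℚ y b else 0) := by
                exact Finset.sum_congr rfl fun x _ => if_congr (hiff x) rfl rfl
            _ = (∑ x ∈ Finset.Icc ⊥ y, IncidenceAlgebra.mu ℚ ⊥ x) * IncidenceAlgebra.mu ℚ y b := by
                rw [sum_ite_interval, Finset.sum_mul]
            _ = 0 := by
                rw [IncidenceAlgebra.sum_Icc_mu_right, if_neg, zero_mul]
                intro hbot
                exact absurd (hbot ▸ hay.1) (not_le_of_gt ha)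
        · exact Finset.sum_eq_zero fun x _ => if_neg fun h => hay ⟨le_trans le_sup_right h.1, h.2⟩

end Weisner2


section NB

variable {m : ℕ}

noncomputable def nb (σ : Setoid (Fin m)) : ℕ := Fintype.card (Quotient σ)

noncomputable def qmap {σ τ : Setoid (Fin m)} (h : σ ≤ τ) : Quotient σ → Quotient τ :=
  Quotient.map' id (fun _ _ hxy => h hxy)

lemma qmap_mk {σ τ : Setoid (Fin m)} (h : σ ≤ τ) (x : Fin m) :
    qmap h (Quotient.mk σ x) = Quotient.mk τ x := rfl

lemma qmap_surj {σ τ : Setoid (Fin m)} (h : σ ≤ τ) : Function.Surjective (qmap h) := by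
  intro q
  obtain ⟨x, rfl⟩ := Quotient.exists_rep q
  exact ⟨Quotient.mk σ x, rfl⟩

lemma nb_le_of_le {σ τ : Setoid (Fin m)} (h : σ ≤ τ) : nb τ ≤ nb σ :=
  Fintype.card_le_of_surjective _ (qmap_surj h)

lemma nb_bot : nb (⊥ : Setoid (Fin m)) = m := by
  have hb : Function.Bijective (Quotient.mk (⊥ : Setoid (Fin m))) := by
    constructor
    · intro x y hxy
      exact Quotient.eq''.mp hxy
    · exact fun q => Quotient.exists_rep q
  rw [nb, ← Fintype.card_of_bijective hb, Fintype.card_fin]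

lemma nb_le (σ : Setoid (Fin m)) : nb σ ≤ m := by
  have := nb_le_of_le (bot_le (a := σ))
  rwa [nb_bot] at this

lemma eq_of_le_of_nb_le {σ τ : Setoid (Fin m)} (h : σ ≤ τ) (hc : nb σ ≤ nb τ) : σ = τ := by
  have hbij : Function.Bijective (qmap h) :=
    (Fintype.bijective_iff_surjective_and_card _).mpr
      ⟨qmap_surj h, le_antisymm hc (nb_le_of_le h)⟩
  refine le_antisymm h fun x y hxy => ?_
  have : qmap h (Quotient.mk σ x) = qmap h (Quotient.mk σ y) := by
    rw [qmap_mk, qmap_mk]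
    exact Quotient.sound' hxy
  exact Quotient.eq''.mp (hbij.1 this)

lemma nb_lt_of_lt {σ τ : Setoid (Fin m)} (h : σ < τ) : nb τ < nb σ := by
  rcases lt_or_ge (nb τ) (nb σ) with h' | h'
  · exact h'
  · exact absurd (eq_of_le_of_nb_le h.le h') h.ne

end NB


section PairStuff
variable {m : ℕ}

def pairS (i j : Fin m) : Setoid (Fin m) where
  r x y := x = y ∨ (x = i ∧ y = j) ∨ (x = j ∧ y = i)
  iseqv := by
    constructor
    · exact fun x => Or.inl rfl
    · rintro x y (rfl | ⟨rfl, rfl⟩ | ⟨rfl, rfl⟩) <;> tauto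
    · rintro x y z h1 h2
      rcases h1 with h1 | ⟨h1a, h1b⟩ | ⟨h1a, h1b⟩ <;>
        rcases h2 with h2 | ⟨h2a, h2b⟩ | ⟨h2a, h2b⟩ <;> subst_vars <;> tauto

lemma bot_lt_pairS {i j : Fin m} (hij : i ≠ j) : ⊥ < pairS i j := by
  refine lt_of_le_of_ne bot_le fun h => ?_
  have : pairS i j i j := Or.inr (Or.inl ⟨rfl, rfl⟩)
  rw [← h] at this
  exact hij this

def joinPair (σ : Setoid (Fin m)) (i j : Fin m) : Setoid (Fin m) where
  r x y := σ x y ∨ (σ x i ∧ σ j y) ∨ (σ x j ∧ σ i y)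
  iseqv := by
    constructor
    · exact fun x => Or.inl (σ.refl x)
    · rintro x y (h | ⟨h1, h2⟩ | ⟨h1, h2⟩)
      · exact Or.inl (σ.symm h)
      · exact Or.inr (Or.inr ⟨σ.symm h2, σ.symm h1⟩)
      · exact Or.inr (Or.inl ⟨σ.symm h2, σ.symm h1⟩)
    · rintro x y z (h | ⟨h1, h2⟩ | ⟨h1, h2⟩) (h' | ⟨h1', h2'⟩ | ⟨h1', h2'⟩)
      · exact Or.inl (σ.trans h h')
      · exact Or.inr (Or.inl ⟨σ.trans h h1', h2'⟩)
      · exact Or.inr (Or.inr ⟨σ.trans h h1', h2'⟩)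
      · exact Or.inr (Or.inl ⟨h1, σ.trans h2 h'⟩)
      · exact Or.inl (σ.trans h1 (σ.trans (σ.symm (σ.trans h2 h1')) h2'))
      · exact Or.inl (σ.trans h1 h2')
      · exact Or.inr (Or.inr ⟨h1, σ.trans h2 h'⟩)
      · exact Or.inl (σ.trans h1 h2')
      · exact Or.inl (σ.trans (σ.trans h1 (σ.symm (σ.trans h2 h1'))) h2')

lemma sup_pairS (σ : Setoid (Fin m)) (i j : Fin m) : σ ⊔ pairS i j = joinPair σ i j := by
  apply le_antisymm
  · apply sup_le
    · intro x y h; exact Or.inl h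
    · rintro x y (rfl | ⟨rfl, rfl⟩ | ⟨rfl, rfl⟩)
      · exact Or.inl (σ.refl x)
      · exact Or.inr (Or.inl ⟨σ.refl _, σ.refl _⟩)
      · exact Or.inr (Or.inr ⟨σ.refl _, σ.refl _⟩)
  · intro x y h
    have hσ : σ ≤ σ ⊔ pairS i j := le_sup_left
    have hp : pairS i j ≤ σ ⊔ pairS i j := le_sup_right
    have hij : (σ ⊔ pairS i j) i j := hp (Or.inr (Or.inl ⟨rfl, rfl⟩))
    rcases h with h | ⟨h1, h2⟩ | ⟨h1, h2⟩
    · exact hσ h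
    · exact (σ ⊔ pairS i j).trans (hσ h1) ((σ ⊔ pairS i j).trans hij (hσ h2))
    · exact (σ ⊔ pairS i j).trans (hσ h1) ((σ ⊔ pairS i j).trans
        ((σ ⊔ pairS i j).symm hij) (hσ h2))

def splitOff (ρ : Setoid (Fin m)) (i : Fin m) : Setoid (Fin m) where
  r u v := u = v ∨ (ρ u v ∧ u ≠ i ∧ v ≠ i)
  iseqv := by
    constructor
    · exact fun x => Or.inl rfl
    · rintro x y (rfl | ⟨h, h1, h2⟩)
      · exact Or.inl rfl
      · exact Or.inr ⟨ρ.symm h, h2, h1⟩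
    · rintro x y z (rfl | ⟨h, h1, h2⟩) (rfl | ⟨h', h1', h2'⟩)
      · exact Or.inl rfl
      · exact Or.inr ⟨h', h1', h2'⟩
      · exact Or.inr ⟨h, h1, h2⟩
      · exact Or.inr ⟨ρ.trans h h', h1, h2'⟩

lemma splitOff_le (ρ : Setoid (Fin m)) (i : Fin m) : splitOff ρ i ≤ ρ := by
  rintro x y (rfl | ⟨h, _, _⟩)
  · exact ρ.refl x
  · exact h

lemma splitOff_ne {ρ : Setoid (Fin m)} {i j : Fin m} (hij : i ≠ j) (hρ : ρ i j) :
    splitOff ρ i ≠ ρ := by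
  intro h
  have : splitOff ρ i i j := by rw [h]; exact hρ
  rcases this with h' | ⟨_, h1, _⟩
  · exact hij h'
  · exact h1 rfl

lemma splitOff_sup_pairS {ρ : Setoid (Fin m)} {i j : Fin m} (hij : i ≠ j) (hρ : ρ i j) :
    splitOff ρ i ⊔ pairS i j = ρ := by
  rw [sup_pairS]
  apply Setoid.ext
  intro u v
  constructor
  · rintro ((rfl | ⟨h, _, _⟩) | ⟨h1, h2⟩ | ⟨h1, h2⟩)
    · exact ρ.refl u
    · exact h
    · have hu : u = i := by rcases h1 with h' | ⟨_, _, hi⟩; exacts [h', absurd rfl hi]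
      have hv : ρ j v := by
        rcases h2 with h' | ⟨h', _, _⟩
        · rw [← h']
        · exact h'
      rw [hu]; exact ρ.trans hρ hv
    · have hv : v = i := by rcases h2 with h' | ⟨_, hi, _⟩; exacts [h'.symm, absurd rfl hi]
      have hu : ρ u j := by
        rcases h1 with h' | ⟨h', _, _⟩
        · rw [h']
        · exact h'
      rw [hv]; exact ρ.trans hu (ρ.symm hρ)
  · intro h
    by_cases hu : u = i <;> by_cases hv : v = i
    · rw [hu, hv]
    · rw [hu] at h ⊢
      exact Or.inr (Or.inl ⟨Or.inl rfl, Or.inr ⟨ρ.trans (ρ.symm hρ) h, hij.symm, hv⟩⟩)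
    · rw [hv] at h ⊢
      exact Or.inr (Or.inr ⟨Or.inr ⟨ρ.trans h hρ, hu, hij.symm⟩, Or.inl rfl⟩)
    · exact Or.inl (Or.inr ⟨h, hu, hv⟩)

end PairStuff

section CardJoin
variable {m : ℕ}

lemma nb_le_joinPair (σ : Setoid (Fin m)) (i j : Fin m) :
    nb σ ≤ nb (joinPair σ i j) + 1 := by
  classical
  set J := joinPair σ i j with hJ
  have hle : σ ≤ J := fun x y h => Or.inl h
  have hinj : Set.InjOn (qmap hle)
      ((Finset.univ.erase (Quotient.mk σ i) : Finset (Quotient σ)) : Set (Quotient σ)) := by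
    intro a ha b hb hab
    obtain ⟨x, rfl⟩ := Quotient.exists_rep a
    obtain ⟨y, rfl⟩ := Quotient.exists_rep b
    rw [qmap_mk, qmap_mk] at hab
    have hxy : J x y := Quotient.eq''.mp hab
    rcases hxy with h | ⟨h1, h2⟩ | ⟨h1, h2⟩
    · exact Quotient.sound' h
    · exact absurd (Quotient.sound' h1) (Finset.mem_erase.mp (Finset.mem_coe.mp ha)).1
    · exact absurd (Quotient.sound' (σ.symm h2)) (Finset.mem_erase.mp (Finset.mem_coe.mp hb)).1
  have hcard : (Finset.univ.erase (Quotient.mk σ i)).card ≤ nb J := by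
    have := Finset.card_le_card_of_injOn (qmap hle)
      (fun a _ => Finset.mem_univ _) hinj
    simpa [nb] using this
  have : (Finset.univ.erase (Quotient.mk σ i)).card = nb σ - 1 := by
    rw [Finset.card_erase_of_mem (Finset.mem_univ _)]
    simp [nb]
  have h1 : 1 ≤ nb σ := by
    have : (Quotient.mk σ i) ∈ (Finset.univ : Finset (Quotient σ)) := Finset.mem_univ _
    have := Finset.card_pos.mpr ⟨_, this⟩
    exact this
  omega

end CardJoin

section Sign
variable {m : ℕ}

lemma exists_pair_of_ne_bot {ρ : Setoid (Fin m)} (h : ρ ≠ ⊥) :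
    ∃ i j : Fin m, i ≠ j ∧ ρ i j := by
  by_contra hc
  push_neg at hc
  apply h
  refine le_antisymm (fun x y hxy => ?_) bot_le
  have hxy' : x = y := by
    by_contra hne
    exact hc x y hne hxy
  exact hxy'

lemma mu_sign (ρ : Setoid (Fin m)) :
    0 < (-1 : ℚ) ^ (m - nb ρ) * IncidenceAlgebra.mu ℚ ⊥ ρ := by
  induction ρ using WellFoundedLT.induction with
  | ind ρ IH =>
    by_cases hbot : ρ = ⊥
    · subst hbot
      rw [nb_bot, Nat.sub_self, pow_zero, one_mul]
      simp
    · obtain ⟨i, j, hij, hρ⟩ := exists_pair_of_ne_bot hbot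
      have ha : ⊥ < pairS i j := bot_lt_pairS hij
      have hw := weisner (pairS i j) ρ ha
      set T : Finset (Setoid (Fin m)) :=
        Finset.univ.filter (fun x => x ⊔ pairS i j = ρ) with hT
      have hsum : ∑ x ∈ T, IncidenceAlgebra.mu ℚ ⊥ x = 0 := by
        rw [hT, Finset.sum_filter]; exact hw
      have hρT : ρ ∈ T := by
        rw [hT, Finset.mem_filter]
        exact ⟨Finset.mem_univ _, sup_eq_left.mpr (by
          intro x y hxy
          rcases hxy with rfl | ⟨rfl, rfl⟩ | ⟨rfl, rfl⟩
          · exact ρ.refl x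
          · exact hρ
          · exact ρ.symm hρ)⟩
      have hmu : IncidenceAlgebra.mu ℚ ⊥ ρ
          = -∑ x ∈ T.erase ρ, IncidenceAlgebra.mu ℚ ⊥ x := by
        have := Finset.add_sum_erase T (fun x => IncidenceAlgebra.mu ℚ ⊥ x) hρT
        rw [hsum] at this
        linarith
      -- facts about elements of T.erase ρ
      have hlt : ∀ x ∈ T.erase ρ, x < ρ := by
        intro x hx
        obtain ⟨hne, hmem⟩ := Finset.mem_erase.mp hx
        have hxρ : x ⊔ pairS i j = ρ := (Finset.mem_filter.mp hmem).2
        exact lt_of_le_of_ne (le_trans le_sup_left hxρ.le) hne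
      have hnb : ∀ x ∈ T.erase ρ, nb x = nb ρ + 1 := by
        intro x hx
        obtain ⟨hne, hmem⟩ := Finset.mem_erase.mp hx
        have hxρ : x ⊔ pairS i j = ρ := (Finset.mem_filter.mp hmem).2
        have h1 : nb ρ < nb x := nb_lt_of_lt (hlt x hx)
        have h2 : nb x ≤ nb ρ + 1 := by
          have := nb_le_joinPair x i j
          rw [← sup_pairS, hxρ] at this
          exact this
        omega
      have hne : (T.erase ρ).Nonempty := by
        refine ⟨splitOff ρ i, Finset.mem_erase.mpr ⟨splitOff_ne hij hρ, ?_⟩⟩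
        rw [hT, Finset.mem_filter]
        exact ⟨Finset.mem_univ _, splitOff_sup_pairS hij hρ⟩
      obtain ⟨k, hk⟩ : ∃ k, m - nb ρ = k + 1 := by
        refine ⟨m - nb ρ - 1, ?_⟩
        have hρm : nb ρ < m := by
          rcases lt_or_eq_of_le (nb_le ρ) with h | h
          · exact h
          · exact absurd (eq_of_le_of_nb_le (bot_le (a := ρ)) (by rw [h, nb_bot])).symm hbot
        omega
      have hterm : ∀ x ∈ T.erase ρ,
          0 < (-1 : ℚ) ^ k * IncidenceAlgebra.mu ℚ ⊥ x := by
        intro x hx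
        have hIH := IH x (hlt x hx)
        have hx' : m - nb x = k := by
          have := hnb x hx
          have := nb_le x
          omega
        rwa [hx'] at hIH
      calc (0:ℚ) < ∑ x ∈ T.erase ρ, (-1 : ℚ) ^ k * IncidenceAlgebra.mu ℚ ⊥ x :=
            Finset.sum_pos hterm hne
        _ = (-1 : ℚ) ^ k * ∑ x ∈ T.erase ρ, IncidenceAlgebra.mu ℚ ⊥ x :=
            (Finset.mul_sum _ _ _).symm
        _ = (-1 : ℚ) ^ (m - nb ρ) * IncidenceAlgebra.mu ℚ ⊥ ρ := by
            rw [hmu, hk, pow_succ]; ring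

lemma muS_bot_ne_zero (ρ : Setoid (Fin m)) : IncidenceAlgebra.mu ℚ ⊥ ρ ≠ 0 := by
  intro h
  have := mu_sign ρ
  rw [h, mul_zero] at this
  exact lt_irrefl 0 this

end Sign

section SymFunAux
variable {m : ℕ}

lemma eFun_eq_inf (π : Setoid (Fin m)) (w : Fin m → ℕ) :
    eFun π w = if π ⊓ Setoid.ker w = ⊥ then (1 : ℚ) else 0 := by
  rw [eFun]
  refine if_congr ?_ rfl rfl
  constructor
  · intro h
    refine le_antisymm (fun x y hxy => ?_) bot_le
    have h1 : π x y := hxy.1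
    have h2 : w x = w y := hxy.2
    show x = y
    by_contra hne
    exact h x y hne h1 h2
  · intro h i j hij hπ hw
    have hm : (π ⊓ Setoid.ker w) i j := ⟨hπ, hw⟩
    rw [h] at hm
    exact hij hm

lemma pFun_eq_le (π : Setoid (Fin m)) (w : Fin m → ℕ) :
    pFun π w = if π ≤ Setoid.ker w then (1 : ℚ) else 0 := by
  rw [pFun]
  refine if_congr ⟨fun h x y hxy => h x y hxy, fun h i j hij => h hij⟩ rfl rfl

lemma eFun_eq_sum (τ : Setoid (Fin m)) (w : Fin m → ℕ) :
    eFun τ w = ∑ γ : Setoid (Fin m),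
      (if γ ≤ τ ∧ γ ≤ Setoid.ker w then IncidenceAlgebra.mu ℚ ⊥ γ else 0) := by
  calc eFun τ w = if ⊥ = τ ⊓ Setoid.ker w then (1:ℚ) else 0 := by
        rw [eFun_eq_inf]; exact if_congr eq_comm rfl rfl
    _ = ∑ γ ∈ Finset.Icc ⊥ (τ ⊓ Setoid.ker w), IncidenceAlgebra.mu ℚ ⊥ γ :=
        (IncidenceAlgebra.sum_Icc_mu_right _ _).symm
    _ = ∑ γ : Setoid (Fin m), (if ⊥ ≤ γ ∧ γ ≤ τ ⊓ Setoid.ker w then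
        IncidenceAlgebra.mu ℚ ⊥ γ else 0) := (sum_ite_interval _ _ _).symm
    _ = _ := Finset.sum_congr rfl fun γ _ =>
        if_congr (by simp [le_inf_iff, bot_le]) rfl rfl

lemma eFun_expand (π : Setoid (Fin m)) (w : Fin m → ℕ) :
    eFun π w = ∑ σ : Setoid (Fin m),
      (if σ ≤ π then IncidenceAlgebra.mu ℚ ⊥ σ * pFun σ w else 0) := by
  rw [eFun_eq_sum]
  refine Finset.sum_congr rfl fun σ _ => ?_
  rw [pFun_eq_le, mul_ite, mul_one, mul_zero]
  by_cases h1 : σ ≤ π <;> by_cases h2 : σ ≤ Setoid.ker w <;> simp [h1, h2]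

lemma sum_mu_eFun (ρ : Setoid (Fin m)) (w : Fin m → ℕ) :
    ∑ τ : Setoid (Fin m), (if τ ≤ ρ then IncidenceAlgebra.mu ℚ τ ρ * eFun τ w else 0)
      = IncidenceAlgebra.mu ℚ ⊥ ρ * pFun ρ w := by
  have key : ∀ τ : Setoid (Fin m), (if τ ≤ ρ then IncidenceAlgebra.mu ℚ τ ρ * eFun τ w else 0)
      = ∑ γ : Setoid (Fin m), (if (γ ≤ Setoid.ker w) ∧ (γ ≤ τ ∧ τ ≤ ρ) then
          IncidenceAlgebra.mu ℚ τ ρ * IncidenceAlgebra.mu ℚ ⊥ γ else 0) := by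
    intro τ
    by_cases h1 : τ ≤ ρ
    · rw [if_pos h1, eFun_eq_sum, Finset.mul_sum]
      refine Finset.sum_congr rfl fun γ _ => ?_
      rw [mul_ite, mul_zero]
      exact if_congr (by tauto) rfl rfl
    · rw [if_neg h1]
      exact (Finset.sum_eq_zero fun γ _ => if_neg (by tauto)).symm
  rw [Finset.sum_congr rfl (fun τ _ => key τ), Finset.sum_comm]
  have key2 : ∀ γ : Setoid (Fin m),
      (∑ τ : Setoid (Fin m), if (γ ≤ Setoid.ker w) ∧ (γ ≤ τ ∧ τ ≤ ρ) then
          IncidenceAlgebra.mu ℚ τ ρ * IncidenceAlgebra.mu ℚ ⊥ γ else 0)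
      = if γ = ρ ∧ γ ≤ Setoid.ker w then IncidenceAlgebra.mu ℚ ⊥ γ else 0 := by
    intro γ
    by_cases hk : γ ≤ Setoid.ker w
    · calc (∑ τ : Setoid (Fin m), if (γ ≤ Setoid.ker w) ∧ (γ ≤ τ ∧ τ ≤ ρ) then
            IncidenceAlgebra.mu ℚ τ ρ * IncidenceAlgebra.mu ℚ ⊥ γ else 0)
          = ∑ τ : Setoid (Fin m), (if γ ≤ τ ∧ τ ≤ ρ then
            IncidenceAlgebra.mu ℚ τ ρ else 0) * IncidenceAlgebra.mu ℚ ⊥ γ := by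
            refine Finset.sum_congr rfl fun τ _ => ?_
            rw [ite_mul, zero_mul]
            exact if_congr (by tauto) rfl rfl
        _ = (∑ τ ∈ Finset.Icc γ ρ, IncidenceAlgebra.mu ℚ τ ρ) * IncidenceAlgebra.mu ℚ ⊥ γ := by
            rw [← Finset.sum_mul, sum_ite_interval]
        _ = (if γ = ρ then (1:ℚ) else 0) * IncidenceAlgebra.mu ℚ ⊥ γ := by
            rw [IncidenceAlgebra.sum_Icc_mu_left]
        _ = if γ = ρ ∧ γ ≤ Setoid.ker w then IncidenceAlgebra.mu ℚ ⊥ γ else 0 := by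
            rcases eq_or_ne γ ρ with rfl | h
            · simp [hk]
            · simp [h]
    · rw [if_neg (by tauto)]
      exact Finset.sum_eq_zero fun τ _ => if_neg (by tauto)
  rw [Finset.sum_congr rfl (fun γ _ => key2 γ), pFun_eq_le, mul_ite, mul_one, mul_zero]
  by_cases hk : ρ ≤ Setoid.ker w
  · rw [if_pos hk, Finset.sum_eq_single ρ]
    · simp [hk]
    · intro b _ hb; exact if_neg (by tauto)
    · intro h; exact absurd (Finset.mem_univ ρ) h
  · rw [if_neg hk]
    exact Finset.sum_eq_zero fun γ _ => if_neg (by rintro ⟨rfl, h⟩; exact hk h)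

lemma inner_sum_eq (ρ : Setoid (Fin m)) :
    (∑ τ : Setoid (Fin m), if τ ≤ ρ then IncidenceAlgebra.mu ℚ τ ρ • eFun τ else 0)
      = IncidenceAlgebra.mu ℚ ⊥ ρ • pFun ρ := by
  funext w
  rw [Finset.sum_apply, Pi.smul_apply, smul_eq_mul, ← sum_mu_eFun ρ w]
  refine Finset.sum_congr rfl fun τ _ => ?_
  by_cases h : τ ≤ ρ <;> simp [h]

lemma eFun_expand_fun (π : Setoid (Fin m)) :
    eFun π = ∑ σ : Setoid (Fin m),
      (if σ ≤ π then IncidenceAlgebra.mu ℚ ⊥ σ • pFun σ else 0) := by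
  funext w
  rw [Finset.sum_apply, eFun_expand π w]
  refine Finset.sum_congr rfl fun σ _ => ?_
  by_cases h : σ ≤ π <;> simp [h]

end SymFunAux

section UpAux
variable {n : ℕ}

lemma up_sum {ι : Type*} (s : Finset ι) (F : ι → NCF (n + 1)) :
    up (∑ i ∈ s, F i) = ∑ i ∈ s, up (F i) := by
  funext w
  by_cases h : w (Fin.last (n + 1)) = w ⟨n, by omega⟩
  · simp only [up, if_pos h, Finset.sum_apply]
  · simp only [up, if_neg h, Finset.sum_apply]
    exact (Finset.sum_eq_zero fun i _ => rfl).symm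

lemma up_smul (c : ℚ) (f : NCF (n + 1)) : up (c • f) = c • up f := by
  funext w
  by_cases h : w (Fin.last (n + 1)) = w ⟨n, by omega⟩
  · simp only [up, if_pos h, Pi.smul_apply]
  · simp only [up, if_neg h, Pi.smul_apply, smul_zero]

lemma up_zero : up (0 : NCF (n + 1)) = 0 := by
  funext w
  by_cases h : w (Fin.last (n + 1)) = w ⟨n, by omega⟩
  · simp only [up, if_pos h, Pi.zero_apply]
  · simp only [up, if_neg h, Pi.zero_apply]

end UpAux

section AddLastAux
variable {d : ℕ}

lemma addLast_rel (σ : Setoid (Fin (d + 1))) (x y : Fin (d + 2)) :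
    addLast σ x y ↔ (x = y ∨
      (∃ (hx : (x : ℕ) < d + 1) (hy : (y : ℕ) < d + 1), σ ⟨x, hx⟩ ⟨y, hy⟩) ∨
      (((∃ hx : (x : ℕ) < d + 1, σ ⟨x, hx⟩ (Fin.last d)) ∨ (d + 1 ≤ (x : ℕ))) ∧
       ((∃ hy : (y : ℕ) < d + 1, σ ⟨y, hy⟩ (Fin.last d)) ∨ (d + 1 ≤ (y : ℕ))))) := by
  constructor
  · rintro (rfl | h | ⟨h1, h2⟩)
    · exact Or.inl rfl
    · exact Or.inr (Or.inl h)
    · refine Or.inr (Or.inr ⟨?_, ?_⟩)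
      · rcases h1 with h | ⟨h, _⟩; exacts [Or.inl h, Or.inr h]
      · rcases h2 with h | ⟨h, _⟩; exacts [Or.inl h, Or.inr h]
  · rintro (rfl | h | ⟨h1, h2⟩)
    · exact Or.inl rfl
    · exact Or.inr (Or.inl h)
    · refine Or.inr (Or.inr ⟨?_, ?_⟩)
      · rcases h1 with h | h; exacts [Or.inl h, Or.inr ⟨h, trivial⟩]
      · rcases h2 with h | h; exacts [Or.inl h, Or.inr ⟨h, trivial⟩]

lemma addLast_castSucc (σ : Setoid (Fin (d + 1))) {i j : Fin (d + 1)} (h : σ i j) :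
    addLast σ i.castSucc j.castSucc := by
  rw [addLast_rel]
  refine Or.inr (Or.inl ⟨i.isLt, j.isLt, ?_⟩)
  have hi : (⟨((i.castSucc : Fin (d + 2)) : ℕ), i.isLt⟩ : Fin (d + 1)) = i := by
    apply Fin.ext; rfl
  have hj : (⟨((j.castSucc : Fin (d + 2)) : ℕ), j.isLt⟩ : Fin (d + 1)) = j := by
    apply Fin.ext; rfl
  rw [hi, hj]
  exact h

lemma addLast_last (σ : Setoid (Fin (d + 1))) :
    addLast σ (Fin.last (d + 1)) (⟨d, by omega⟩ : Fin (d + 2)) := by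
  rw [addLast_rel]
  exact Or.inr (Or.inr ⟨Or.inr (le_refl _), Or.inl ⟨Nat.lt_succ_self d, σ.refl _⟩⟩)

lemma up_pFun (σ : Setoid (Fin (d + 1))) : up (pFun σ) = pFun (addLast σ) := by
  funext w
  by_cases hA : w (Fin.last (d + 1)) = w ⟨d, by omega⟩
  · by_cases hB : ∀ i j : Fin (d + 1), σ i j → w i.castSucc = w j.castSucc
    · have hAll : ∀ x y : Fin (d + 2), addLast σ x y → w x = w y := by
        have hP : ∀ z : Fin (d + 2),
            ((∃ hz : (z : ℕ) < d + 1, σ ⟨z, hz⟩ (Fin.last d)) ∨ (d + 1 ≤ (z : ℕ))) →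
            w z = w ⟨d, by omega⟩ := by
          rintro z (⟨hz, hσ⟩ | hz)
          · have hz1 : (⟨z, hz⟩ : Fin (d + 1)).castSucc = z := Fin.ext rfl
            have hz2 : (Fin.last d).castSucc = (⟨d, by omega⟩ : Fin (d + 2)) := Fin.ext rfl
            rw [← hz1, ← hz2]
            exact hB _ _ hσ
          · have hz1 : z = Fin.last (d + 1) := by
              apply Fin.ext
              have := z.isLt
              simp only [Fin.val_last]
              omega
            rw [hz1]
            exact hA
        intro x y hxy
        rw [addLast_rel] at hxy
        rcases hxy with rfl | ⟨hx, hy, h⟩ | ⟨h1, h2⟩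
        · rfl
        · have hx1 : (⟨x, hx⟩ : Fin (d + 1)).castSucc = x := Fin.ext rfl
          have hy1 : (⟨y, hy⟩ : Fin (d + 1)).castSucc = y := Fin.ext rfl
          rw [← hx1, ← hy1]
          exact hB _ _ h
        · rw [hP x h1, hP y h2]
      simp only [up, pFun, if_pos hA, if_pos hB, if_pos hAll]
    · have hnAll : ¬ ∀ x y : Fin (d + 2), addLast σ x y → w x = w y := by
        intro hAll
        apply hB
        intro i j h
        exact hAll _ _ (addLast_castSucc σ h)
      simp only [up, pFun, if_pos hA, if_neg hB, if_neg hnAll]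
  · have hnAll : ¬ ∀ x y : Fin (d + 2), addLast σ x y → w x = w y := by
      intro hAll
      exact hA (hAll _ _ (addLast_last σ))
    simp only [up, pFun, if_neg hA, if_neg hnAll]

end AddLastAux

/-- The Möbius-function formula for `e_π↑`. -/
theorem up_eFun_eq_moebius_sum {d : ℕ} (π : Setoid (Fin (d + 1))) :
    up (eFun π) =
      ∑ σ : Setoid (Fin (d + 1)),
        if σ ≤ π then
          (muS ⊥ σ / muS ⊥ (addLast σ)) •
            ∑ τ : Setoid (Fin (d + 2)),
              if τ ≤ addLast σ then muS τ (addLast σ) • eFun τ else 0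
        else 0 := by
  simp only [muS]
  have h1 : up (eFun π) = ∑ σ : Setoid (Fin (d + 1)),
      (if σ ≤ π then IncidenceAlgebra.mu ℚ ⊥ σ • pFun (addLast σ) else 0) := by
    rw [eFun_expand_fun π, up_sum]
    refine Finset.sum_congr rfl fun σ _ => ?_
    by_cases h : σ ≤ π
    · rw [if_pos h, if_pos h, up_smul, up_pFun]
    · rw [if_neg h, if_neg h, up_zero]
  rw [h1]
  refine Finset.sum_congr rfl fun σ _ => ?_
  by_cases h : σ ≤ π
  · rw [if_pos h, if_pos h, inner_sum_eq (addLast σ), smul_smul,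
      div_mul_cancel₀ _ (muS_bot_ne_zero (addLast σ))]
  · rw [if_neg h, if_neg h]
end
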